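/- Deterministic-coefficient case of Proposition 1.1, variation-of-constants formula for the deviation: the function D satisfies D(r) = d − ∫_t^r D(s)ρ(s) ds + ∫_{[t,r]} γ(s) dX(s) for every r∈[t,T]; moreover, D is the unique right-continuous function on [t,T] with this property. -/

import Mathlib

open MeasureTheory Set Filter Topology

noncomputable section

lemma aux_fin (A : StieltjesFunction ℝ) (t r : ℝ) :
    IsFiniteMeasure (A.measure.restrict (Icc t r)) := by
  constructor
  rw [Measure.restrict_apply_univ, A.measure_Icc]
  exact ENNReal.ofReal_lt_top

lemma aux_ibp (A : StieltjesFunction ℝ) (t r : ℝ) (htr : t ≤ r) (f f' : ℝ → ℝ)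
    (hf' : Continuous f') (hd : ∀ s ∈ Icc t r, HasDerivAt f (f' s) s) :
    ∫ s in Icc t r, f s ∂A.measure
      = f r * A r - f t * Function.leftLim A t - ∫ s in t..r, f' s * A s := by
  haveI := aux_fin A t r
  haveI : IsFiniteMeasure (volume.restrict (Ioc t r)) := by
    constructor
    rw [Measure.restrict_apply_univ, Real.volume_Ioc]
    exact ENNReal.ofReal_lt_top
  have hfc : ContinuousOn f (Icc t r) := fun s hs => (hd s hs).continuousAt.continuousWithinAt
  -- FTC on subintervals
  have hftc : ∀ u ∈ Icc t r, (∫ s in u..r, f' s) = f r - f u := by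
    intro u hu
    refine intervalIntegral.integral_eq_sub_of_hasDerivAt ?_ (hf'.intervalIntegrable _ _)
    intro s hs
    rw [uIcc_of_le hu.2] at hs
    exact hd s ⟨le_trans hu.1 hs.1, hs.2⟩
  -- bound on f'
  obtain ⟨C, hC⟩ : ∃ C, ∀ s ∈ Icc t r, ‖f' s‖ ≤ C :=
    isCompact_Icc.exists_bound_of_continuousOn hf'.continuousOn
  have hC0 : 0 ≤ C := le_trans (norm_nonneg _) (hC t ⟨le_rfl, htr⟩)
  -- the Fubini core
  set μ₁ := A.measure.restrict (Icc t r) with hμ₁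
  set μ₂ := volume.restrict (Ioc t r) with hμ₂
  set F : ℝ → ℝ → ℝ := fun u s => if u < s then f' s else 0 with hF
  have hFmeas : AEStronglyMeasurable (Function.uncurry F) (μ₁.prod μ₂) := by
    have : Function.uncurry F = Set.indicator {p : ℝ × ℝ | p.1 < p.2} (fun p => f' p.2) := by
      funext p
      simp only [Function.uncurry, hF, Set.indicator_apply, mem_setOf_eq]
    rw [this]
    exact (((hf'.comp continuous_snd).stronglyMeasurable).indicator
      (measurableSet_lt measurable_fst measurable_snd)).aestronglyMeasurable
  have hFint : Integrable (Function.uncurry F) (μ₁.prod μ₂) := by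
    refine ⟨hFmeas, ?_⟩
    have hbound : ∀ᵐ p ∂μ₁.prod μ₂, ‖Function.uncurry F p‖ ≤ C := by
      have h2 : ∀ᵐ p ∂μ₁.prod μ₂, p.2 ∈ Ioc t r := by
        rw [ae_iff]
        have : {p : ℝ × ℝ | ¬ p.2 ∈ Ioc t r} = (univ : Set ℝ) ×ˢ (Ioc t r)ᶜ := by
          ext p; simp
        rw [this, hμ₁, hμ₂, Measure.prod_restrict, Measure.restrict_apply]
        · rw [Set.prod_inter_prod]
          simp
        · exact MeasurableSet.prod MeasurableSet.univ (measurableSet_Ioc.compl)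
      filter_upwards [h2] with p hp
      simp only [Function.uncurry, hF]
      split
      · exact hC p.2 ⟨le_of_lt hp.1, hp.2⟩
      · simpa using hC0
    exact (hasFiniteIntegral_const C).mono' hbound
  have swap := integral_integral_swap hFint
  -- identify LHS of swap
  have hL : (∫ u, ∫ s, F u s ∂μ₂ ∂μ₁)
      = ∫ u in Icc t r, (∫ s in u..r, f' s) ∂A.measure := by
    refine setIntegral_congr_fun measurableSet_Icc ?_
    intro u hu
    dsimp only
    have h1 : (∫ s, F u s ∂μ₂) = ∫ s in Ioc t r, Set.indicator (Ioi u) f' s := by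
      refine setIntegral_congr_fun measurableSet_Ioc ?_
      intro s _
      simp [hF, Set.indicator_apply]
    have h2 : Ioc t r ∩ Ioi u = Ioc u r := by
      ext v
      simp only [mem_inter_iff, mem_Ioc, mem_Ioi]
      constructor
      · rintro ⟨⟨_, h2⟩, h3⟩; exact ⟨h3, h2⟩
      · rintro ⟨h2, h3⟩; exact ⟨⟨lt_of_le_of_lt hu.1 h2, h3⟩, h2⟩
    rw [h1, setIntegral_indicator measurableSet_Ioi, h2,
      intervalIntegral.integral_of_le hu.2]
  -- identify RHS of swap
  have hR : (∫ s, ∫ u, F u s ∂μ₁ ∂μ₂)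
      = ∫ s in Ioc t r, f' s * (Function.leftLim A s - Function.leftLim A t) := by
    refine setIntegral_congr_fun measurableSet_Ioc ?_
    intro s hs
    dsimp only
    have h1 : (fun u => F u s) = Set.indicator (Iio s) (fun _ => f' s) := by
      funext u
      simp [hF, Set.indicator_apply, mem_Iio]
    rw [h1]
    rw [integral_indicator measurableSet_Iio]
    rw [hμ₁, Measure.restrict_restrict measurableSet_Iio]
    have h2 : Iio s ∩ Icc t r = Ico t s := by
      ext u
      simp only [mem_inter_iff, mem_Iio, mem_Icc, mem_Ico]
      constructor
      · rintro ⟨h3, h4, _⟩; exact ⟨h4, h3⟩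
      · rintro ⟨h3, h4⟩; exact ⟨h4, h3, le_trans (le_of_lt h4) hs.2⟩
    rw [h2, setIntegral_const, measureReal_def, A.measure_Ico, smul_eq_mul,
      ENNReal.toReal_ofReal (by
        have := A.mono.leftLim (le_of_lt hs.1); linarith), mul_comm]
  -- key Fubini identity with a.e. replacement leftLim = value
  have hnull : (volume : Measure ℝ) {s | Function.leftLim A s ≠ A s} = 0 :=
    A.countable_leftLim_ne.measure_zero _
  have key : (∫ u in Icc t r, (∫ s in u..r, f' s) ∂A.measure)
      = ∫ s in Ioc t r, f' s * (A s - Function.leftLim A t) := by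
    rw [← hL, swap, hR]
    refine integral_congr_ae ?_
    refine ae_restrict_of_ae ?_
    filter_upwards [measure_eq_zero_iff_ae_notMem.mp hnull] with s hs
    simp only [mem_setOf_eq, not_not] at hs
    rw [hs]
  -- integrability facts
  have hint1 : IntervalIntegrable (fun s => f' s * A s) volume t r :=
    A.mono.intervalIntegrable.continuousOn_mul hf'.continuousOn
  have hprim_cont : Continuous (fun u => ∫ s in u..r, f' s) := by
    have : (fun u => ∫ s in u..r, f' s) = (fun u => -(∫ s in r..u, f' s)) := by
      funext u; rw [← intervalIntegral.integral_symm]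
    rw [this]
    exact (intervalIntegral.continuous_primitive (fun a b => hf'.intervalIntegrable a b) r).neg
  have hint2 : Integrable (fun u => ∫ s in u..r, f' s) μ₁ :=
    hprim_cont.integrableOn_Icc
  -- main computation
  have h3 : (∫ s in Icc t r, f s ∂A.measure)
      = ∫ u in Icc t r, (f r - ∫ s in u..r, f' s) ∂A.measure := by
    refine setIntegral_congr_fun measurableSet_Icc ?_
    intro u hu
    dsimp only
    rw [hftc u hu]; ring
  have h4 : (∫ u in Icc t r, (f r : ℝ) ∂A.measure) = (A r - Function.leftLim A t) * f r := by
    rw [setIntegral_const, measureReal_def, A.measure_Icc, smul_eq_mul, ENNReal.toReal_ofReal]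
    have h5 : Function.leftLim A t ≤ A t := A.mono.leftLim_le le_rfl
    have h6 : A t ≤ A r := A.mono htr
    linarith
  have h7 : (∫ s in Ioc t r, f' s * (A s - Function.leftLim A t))
      = (∫ s in t..r, f' s * A s) - Function.leftLim A t * (f r - f t) := by
    have h8 : (∫ s in Ioc t r, f' s * (A s - Function.leftLim A t))
        = ∫ s in t..r, (f' s * A s - Function.leftLim A t * f' s) := by
      rw [intervalIntegral.integral_of_le htr]
      refine setIntegral_congr_fun measurableSet_Ioc ?_
      intro s _; dsimp only; ring
    rw [h8, intervalIntegral.integral_sub hint1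
      ((hf'.intervalIntegrable t r).const_mul _),
      intervalIntegral.integral_const_mul, hftc t ⟨le_rfl, htr⟩]
  rw [h3, integral_sub (integrable_const _) hint2, h4, key, h7]
  ring

set_option maxHeartbeats 1600000 in
/-- deterministic-coefficient case of Proposition 1.1,
variation-of-constants formula for the deviation: with `X = A - B` a right-continuous
function of bounded variation on `[t,T]` (the convention `X(t-) = x` being encoded by
`leftLim A t - leftLim B t = x`), `ν(r) = exp(∫_t^r ρ)` and
`D(r) = γ(r) X(r) + ν(r)⁻¹ (d - γ(t) x - ∫_t^r X (νγ)')`, the function `D` satisfies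
`D(r) = d - ∫_t^r D(s) ρ(s) ds + ∫_{[t,r]} γ dX` for every `r ∈ [t,T]`, and `D` is the
unique right-continuous function on `[t,T]` with this property. -/
theorem deviation_variation_of_constants
    (t T x d : ℝ) (htT : t < T)
    (ρ γ γ' : ℝ → ℝ)
    (hρ : ContinuousOn ρ (Icc t T))
    (hγpos : ∀ s ∈ Icc t T, 0 < γ s)
    (hγderiv : ∀ s ∈ Icc t T, HasDerivAt γ (γ' s) s)
    (hγ'cont : ContinuousOn γ' (Icc t T))
    (A B : StieltjesFunction ℝ)
    (hx : Function.leftLim A t - Function.leftLim B t = x)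
    (X : ℝ → ℝ) (hX : ∀ s, X s = A s - B s)
    (ν : ℝ → ℝ) (hν : ∀ r, ν r = Real.exp (∫ s in t..r, ρ s))
    (D : ℝ → ℝ)
    (hD : ∀ r, D r = γ r * X r + (ν r)⁻¹ *
      (d - γ t * x - ∫ s in t..r, X s * (ν s * (ρ s * γ s + γ' s)))) :
    (∀ r ∈ Icc t T,
      D r = d - (∫ s in t..r, D s * ρ s)
        + ((∫ s in Icc t r, γ s ∂A.measure) - ∫ s in Icc t r, γ s ∂B.measure)) ∧
    (∀ E : ℝ → ℝ,
      (∀ s ∈ Ico t T, Tendsto E (nhdsWithin s (Ioi s)) (nhds (E s))) →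
      (∀ r ∈ Icc t T,
        E r = d - (∫ s in t..r, E s * ρ s)
          + ((∫ s in Icc t r, γ s ∂A.measure) - ∫ s in Icc t r, γ s ∂B.measure)) →
      ∀ r ∈ Icc t T, E r = D r) := by
  have htT' : t ≤ T := htT.le
  -- continuous extensions
  set π : ℝ → ℝ := fun s => (Set.projIcc t T htT' s : ℝ) with hπ
  have hπc : Continuous π := continuous_subtype_val.comp (continuous_projIcc)
  have hπmem : ∀ s, π s ∈ Icc t T := fun s => (Set.projIcc t T htT' s).2
  have hπeq : ∀ s ∈ Icc t T, π s = s := by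
    intro s hs
    show (Set.projIcc t T htT' s : ℝ) = s
    rw [Set.projIcc_of_mem htT' hs]
  set ρc : ℝ → ℝ := fun s => ρ (π s) with hρcdef
  set γc : ℝ → ℝ := fun s => γ (π s) with hγcdef
  set γ'c : ℝ → ℝ := fun s => γ' (π s) with hγ'cdef
  have hγcont : ContinuousOn γ (Icc t T) :=
    fun s hs => (hγderiv s hs).continuousAt.continuousWithinAt
  have hρcc : Continuous ρc := hρ.comp_continuous hπc hπmem
  have hγcc : Continuous γc := hγcont.comp_continuous hπc hπmem
  have hγ'cc : Continuous γ'c := hγ'cont.comp_continuous hπc hπmem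
  have hρceq : ∀ s ∈ Icc t T, ρc s = ρ s := fun s hs => by rw [hρcdef]; simp [hπeq s hs]
  have hγceq : ∀ s ∈ Icc t T, γc s = γ s := fun s hs => by rw [hγcdef]; simp [hπeq s hs]
  have hγ'ceq : ∀ s ∈ Icc t T, γ'c s = γ' s := fun s hs => by rw [hγ'cdef]; simp [hπeq s hs]
  -- exponentials
  set νc : ℝ → ℝ := fun s => Real.exp (∫ u in t..s, ρc u) with hνcdef
  set νi : ℝ → ℝ := fun s => Real.exp (-∫ u in t..s, ρc u) with hνidef
  have hprim : ∀ s : ℝ, HasDerivAt (fun y => ∫ u in t..y, ρc u) (ρc s) s :=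
    fun s => (hρcc.integral_hasStrictDerivAt t s).hasDerivAt
  have hνcd : ∀ s, HasDerivAt νc (ρc s * νc s) s := by
    intro s
    have := (hprim s).exp
    simpa [hνcdef, mul_comm] using this
  have hνid : ∀ s, HasDerivAt νi (-(ρc s * νi s)) s := by
    intro s
    have := ((hprim s).neg).exp
    simpa [hνidef, mul_comm] using this
  have hνcc : Continuous νc := Real.continuous_exp.comp
    (intervalIntegral.continuous_primitive (fun a b => hρcc.intervalIntegrable a b) t)
  have hνic : Continuous νi := Real.continuous_exp.comp
    (intervalIntegral.continuous_primitive (fun a b => hρcc.intervalIntegrable a b) t).neg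
  have hνiνc : ∀ s, νi s * νc s = 1 := by
    intro s; rw [hνidef, hνcdef]; dsimp only; rw [← Real.exp_add]; simp
  have hνit : νi t = 1 := by rw [hνidef]; simp
  have hνeq : ∀ s ∈ Icc t T, ν s = νc s := by
    intro s hs
    rw [hν s, hνcdef]
    congr 1
    refine intervalIntegral.integral_congr ?_
    intro u hu
    rw [uIcc_of_le hs.1] at hu
    exact (hρceq u ⟨hu.1, le_trans hu.2 hs.2⟩).symm
  have hνieq : ∀ s ∈ Icc t T, (ν s)⁻¹ = νi s := by
    intro s hs
    rw [hνeq s hs, hνcdef, hνidef]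
    dsimp only
    rw [← Real.exp_neg]
  -- gd
  set gd : ℝ → ℝ := fun s => νc s * (ρc s * γc s + γ'c s) with hgddef
  have hgdc : Continuous gd := hνcc.mul ((hρcc.mul hγcc).add hγ'cc)
  have hgdeq : ∀ s ∈ Icc t T, ν s * (ρ s * γ s + γ' s) = gd s := by
    intro s hs
    rw [hgddef]
    dsimp only
    rw [hνeq s hs, hρceq s hs, hγceq s hs, hγ'ceq s hs]
  -- X facts
  have hXfun : X = fun s => A s - B s := funext hX
  have hXint : ∀ a b : ℝ, IntervalIntegrable X volume a b := by
    intro a b; rw [hXfun]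
    exact A.mono.intervalIntegrable.sub B.mono.intervalIntegrable
  have hXm : Measurable X := by rw [hXfun]; exact A.mono.measurable.sub B.mono.measurable
  have hXh : ∀ h : ℝ → ℝ, Continuous h → ∀ a b : ℝ,
      IntervalIntegrable (fun s => X s * h s) volume a b :=
    fun h hh a b => (hXint a b).mul_continuousOn hh.continuousOn
  have hXrc : ∀ s, ContinuousWithinAt X (Ioi s) s := by
    intro s
    rw [hXfun]
    exact ((A.right_continuous s).mono Ioi_subset_Ici_self).sub
      ((B.right_continuous s).mono Ioi_subset_Ici_self)
  -- J
  set J : ℝ → ℝ := fun s => ∫ u in t..s, X u * gd u with hJdef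
  have hJc : Continuous J := intervalIntegral.continuous_primitive (hXh gd hgdc) t
  have hJt : J t = 0 := by rw [hJdef]; simp
  have hJd : ∀ s, HasDerivWithinAt J (X s * gd s) (Ioi s) s := by
    intro s
    have : HasDerivWithinAt J (X s * gd s) (Ici s) s := by
      refine intervalIntegral.integral_hasDerivWithinAt_right (hXh gd hgdc t s)
        ⟨univ, univ_mem, ?_⟩ ((hXrc s).mul hgdc.continuousAt.continuousWithinAt)
      exact ((hXm.mul hgdc.measurable).aestronglyMeasurable).restrict
    exact this.mono Ioi_subset_Ici_self
  -- D on Icc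
  have hDs : ∀ s ∈ Icc t T, D s = γ s * X s + νi s * (d - γ t * x - J s) := by
    intro s hs
    have hic : (∫ u in t..s, X u * (ν u * (ρ u * γ u + γ' u))) = J s := by
      refine intervalIntegral.integral_congr ?_
      intro u hu
      rw [uIcc_of_le hs.1] at hu
      dsimp only
      rw [hgdeq u ⟨hu.1, le_trans hu.2 hs.2⟩]
    rw [hD s, hνieq s hs, hic]
  have hpart1 : ∀ r ∈ Icc t T,
      D r = d - (∫ s in t..r, D s * ρ s)
        + ((∫ s in Icc t r, γ s ∂A.measure) - ∫ s in Icc t r, γ s ∂B.measure) := by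
    intro r hr
    obtain ⟨htr, hrT⟩ := hr
    have hsub : Icc t r ⊆ Icc t T := Icc_subset_Icc le_rfl hrT
    -- IBP with γ for A and B
    have hγd' : ∀ s ∈ Icc t r, HasDerivAt γ (γ'c s) s := by
      intro s hs
      rw [hγ'ceq s (hsub hs)]
      exact hγderiv s (hsub hs)
    have ibpA := aux_ibp A t r htr γ γ'c hγ'cc hγd'
    have ibpB := aux_ibp B t r htr γ γ'c hγ'cc hγd'
    have hiA : IntervalIntegrable (fun s => γ'c s * A s) volume t r :=
      A.mono.intervalIntegrable.continuousOn_mul hγ'cc.continuousOn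
    have hiB : IntervalIntegrable (fun s => γ'c s * B s) volume t r :=
      B.mono.intervalIntegrable.continuousOn_mul hγ'cc.continuousOn
    have hG : (∫ s in Icc t r, γ s ∂A.measure) - (∫ s in Icc t r, γ s ∂B.measure)
        = γ r * X r - γ t * x - ∫ s in t..r, X s * γ'c s := by
      rw [ibpA, ibpB]
      have h1 : (∫ s in t..r, X s * γ'c s)
          = (∫ s in t..r, γ'c s * A s) - ∫ s in t..r, γ'c s * B s := by
        rw [← intervalIntegral.integral_sub hiA hiB]
        refine intervalIntegral.integral_congr ?_
        intro u _
        dsimp only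
        rw [hX u]; ring
      rw [h1, hX r, ← hx]
      ring
    -- T2
    have hT2 : (∫ s in t..r, ρc s * νi s) = 1 - νi r := by
      have hd2 : ∀ s ∈ uIcc t r, HasDerivAt (fun y => -νi y) (ρc s * νi s) s := by
        intro s _
        have := (hνid s).neg
        rw [neg_neg] at this; exact this
      rw [intervalIntegral.integral_eq_sub_of_hasDerivAt hd2
        ((hρcc.mul hνic).intervalIntegrable t r)]
      rw [hνit]; ring
    -- T3 via FTC with right derivatives
    have hT3 : (∫ s in t..r, ρc s * νi s * J s)
        = (∫ s in t..r, X s * (ρc s * γc s + γ'c s)) - νi r * J r := by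
      have hKd : ∀ s, HasDerivWithinAt (fun y => νi y * J y)
          (-(ρc s * νi s * J s) + X s * (νi s * gd s)) (Ioi s) s := by
        intro s
        have := ((hνid s).hasDerivWithinAt (s := Ioi s)).mul (hJd s)
        rw [show (fun y => νi y * J y) = νi * J from rfl]
        exact this.congr_deriv (by ring)
      have hint : IntervalIntegrable
          (fun s => -(ρc s * νi s * J s) + X s * (νi s * gd s)) volume t r :=
        (((hρcc.mul hνic).mul hJc).intervalIntegrable t r).neg.add
          (hXh (fun s => νi s * gd s) (hνic.mul hgdc) t r)
      have hftc := intervalIntegral.integral_eq_sub_of_hasDeriv_right_of_le htr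
        ((hνic.mul hJc).continuousOn) (fun s _ => hKd s) hint
      simp only [Pi.mul_apply] at hftc
      rw [hJt, mul_zero, sub_zero] at hftc
      have hsplit : (∫ s in t..r, (-(ρc s * νi s * J s) + X s * (νi s * gd s)))
          = -(∫ s in t..r, ρc s * νi s * J s) + ∫ s in t..r, X s * (νi s * gd s) := by
        have hn : IntervalIntegrable (fun s => -(ρc s * νi s * J s)) volume t r := by
          exact (((hρcc.mul hνic).mul hJc).intervalIntegrable t r).neg
        rw [intervalIntegral.integral_add hn
          (hXh (fun s => νi s * gd s) (hνic.mul hgdc) t r),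
          intervalIntegral.integral_neg]
      have hgd2 : (fun s => X s * (νi s * gd s)) = fun s => X s * (ρc s * γc s + γ'c s) := by
        funext s
        rw [hgddef]
        dsimp only
        rw [show νi s * (νc s * (ρc s * γc s + γ'c s)) = (νi s * νc s) * (ρc s * γc s + γ'c s)
          by ring, hνiνc s, one_mul]
      rw [hsplit, hgd2] at hftc
      linarith [hftc]
    -- splitting ∫ D ρ
    have hQ : (∫ s in t..r, X s * (ρc s * γc s + γ'c s))
        = (∫ s in t..r, X s * (γc s * ρc s)) + ∫ s in t..r, X s * γ'c s := by
      rw [← intervalIntegral.integral_add (hXh (fun s => γc s * ρc s) (hγcc.mul hρcc) t r)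
        (hXh γ'c hγ'cc t r)]
      refine intervalIntegral.integral_congr ?_
      intro u _; dsimp only; ring
    have hDρ : (∫ s in t..r, D s * ρ s)
        = (∫ s in t..r, X s * (γc s * ρc s))
          + (d - γ t * x) * (∫ s in t..r, ρc s * νi s)
          - ∫ s in t..r, ρc s * νi s * J s := by
      have hcongr : (∫ s in t..r, D s * ρ s)
          = ∫ s in t..r, (X s * (γc s * ρc s) + (d - γ t * x) * (ρc s * νi s)
              - ρc s * νi s * J s) := by
        refine intervalIntegral.integral_congr ?_
        intro u hu
        rw [uIcc_of_le htr] at hu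
        have hu' := hsub hu
        dsimp only
        rw [hDs u hu', hρceq u hu', hγceq u hu']
        ring
      rw [hcongr, intervalIntegral.integral_sub, intervalIntegral.integral_add,
        intervalIntegral.integral_const_mul]
      · exact hXh (fun s => γc s * ρc s) (hγcc.mul hρcc) t r
      · exact (((hρcc.mul hνic).intervalIntegrable t r).const_mul _)
      · exact (hXh (fun s => γc s * ρc s) (hγcc.mul hρcc) t r).add
          (((hρcc.mul hνic).intervalIntegrable t r).const_mul _)
      · exact ((hρcc.mul hνic).mul hJc).intervalIntegrable t r
    -- conclude
    rw [hDs r ⟨htr, hrT⟩, hG, hDρ, hT2, hT3, hQ]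
    ring

  refine ⟨hpart1, ?_⟩
  intro E hErc hE
  -- bounded measurable functions are interval integrable
  have hbint : ∀ (f : ℝ → ℝ), Measurable f → ∀ M : ℝ, (∀ s, |f s| ≤ M) →
      ∀ a b : ℝ, IntervalIntegrable f volume a b := by
    intro f hm M hM a b
    rw [intervalIntegrable_iff]
    refine ⟨hm.aestronglyMeasurable.restrict, ?_⟩
    refine HasFiniteIntegral.restrict_of_bounded (C := M) ?_ (ae_of_all _ fun s => ?_)
    · rw [Set.uIoc]; exact measure_Ioc_lt_top
    · rw [Real.norm_eq_abs]; exact hM s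
  -- the Stieltjes part as a function of the endpoint
  set GA : ℝ → ℝ := fun r => ∫ s in Icc t (min r T), γ s ∂A.measure with hGAdef
  set GB : ℝ → ℝ := fun r => ∫ s in Icc t (min r T), γ s ∂B.measure with hGBdef
  have hγA : ∀ (C : StieltjesFunction ℝ) (r : ℝ), IntegrableOn γ (Icc t (min r T)) C.measure :=
    fun C r => (hγcont.mono (Icc_subset_Icc le_rfl (min_le_right r T))).integrableOn_compact
      isCompact_Icc
  have hmono : ∀ C : StieltjesFunction ℝ,
      Monotone (fun r => ∫ s in Icc t (min r T), γ s ∂C.measure) := by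
    intro C a b hab
    refine setIntegral_mono_set (hγA C b) ?_ ?_
    · exact (ae_restrict_mem measurableSet_Icc).mono
        fun s hs => (hγpos s ⟨hs.1, hs.2.trans (min_le_right b T)⟩).le
    · exact (Icc_subset_Icc le_rfl (min_le_min hab le_rfl)).eventuallyLE
  have h0 : ∀ (C : StieltjesFunction ℝ) (r : ℝ),
      0 ≤ ∫ s in Icc t (min r T), γ s ∂C.measure :=
    fun C r => setIntegral_nonneg measurableSet_Icc
      fun s hs => (hγpos s ⟨hs.1, hs.2.trans (min_le_right r T)⟩).le
  have hGA0 : ∀ r, 0 ≤ GA r := h0 A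
  have hGB0 : ∀ r, 0 ≤ GB r := h0 B
  have hlemax : ∀ (C : StieltjesFunction ℝ) (r : ℝ),
      (∫ s in Icc t (min r T), γ s ∂C.measure) ≤ ∫ s in Icc t (min T T), γ s ∂C.measure := by
    intro C r
    have h1 := hmono C (min_le_right r T)
    dsimp only at h1
    rwa [min_eq_left (min_le_right r T)] at h1
  have hGAle : ∀ r, GA r ≤ GA T := fun r => hlemax A r
  have hGBle : ∀ r, GB r ≤ GB T := fun r => hlemax B r
  set G : ℝ → ℝ := fun r => GA r - GB r with hGdef
  have hGeq : ∀ r ∈ Icc t T,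
      ((∫ s in Icc t r, γ s ∂A.measure) - ∫ s in Icc t r, γ s ∂B.measure) = G r := by
    intro r hr
    rw [hGdef, hGAdef, hGBdef]
    dsimp only
    rw [min_eq_left hr.2]
  have hCG : ∀ r, |G r| ≤ GA T + GB T := by
    intro r
    rw [hGdef]
    rw [abs_le]
    constructor
    · dsimp only; linarith [hGA0 r, hGBle r, hGA0 T]
    · dsimp only; linarith [hGB0 r, hGAle r, hGB0 T]
  have hGm : Measurable G := (hmono A).measurable.sub (hmono B).measurable
  -- bound on ρ
  obtain ⟨Mρ, hMρb⟩ := isCompact_Icc.exists_bound_of_continuousOn hρ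
  have hMρ0 : 0 ≤ Mρ := le_trans (norm_nonneg _) (hMρb t ⟨le_rfl, htT'⟩)
  have hρcb : ∀ s, |ρc s| ≤ Mρ := by
    intro s
    have := hMρb (π s) (hπmem s)
    rwa [Real.norm_eq_abs] at this
  have hρb : ∀ s ∈ Icc t T, |ρ s| ≤ Mρ := by
    intro s hs
    have := hMρb s hs
    rwa [Real.norm_eq_abs] at this
  -- the primitive of E ρ
  set I : ℝ → ℝ := fun r => ∫ s in t..r, E s * ρ s with hIdef
  have hE' : ∀ r ∈ Icc t T, E r = d - I r + G r := by
    intro r hr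
    rw [hE r hr, hGeq r hr]
  set Kc : ℝ := (|d| + (GA T + GB T)) * Mρ * (T - t) with hKcdef
  have hdG0 : 0 ≤ |d| + (GA T + GB T) :=
    add_nonneg (abs_nonneg d) (add_nonneg (hGA0 T) (hGB0 T))
  have hKc0 : 0 ≤ Kc := by
    rw [hKcdef]
    have h1 : (0:ℝ) ≤ T - t := by linarith [htT]
    exact mul_nonneg (mul_nonneg hdG0 hMρ0) h1
  set CI : ℝ := Kc + Mρ * gronwallBound 0 Mρ Kc (T - t) with hCIdef
  -- monotonicity of the Gronwall bound
  have hgb : ∀ y : ℝ, 0 ≤ y → y ≤ T - t →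
      gronwallBound 0 Mρ Kc y ≤ gronwallBound 0 Mρ Kc (T - t) := by
    intro y hy0 hyT
    by_cases hK : Mρ = 0
    · simp only [hK, gronwallBound_K0]
      nlinarith [hKc0]
    · simp only [gronwallBound_of_K_ne_0 hK]
      have h1 : Real.exp (Mρ * y) ≤ Real.exp (Mρ * (T - t)) :=
        Real.exp_le_exp.mpr (mul_le_mul_of_nonneg_left hyT hMρ0)
      have h2 : 0 ≤ Kc / Mρ := div_nonneg hKc0 hMρ0
      nlinarith
  have hCI0 : 0 ≤ CI := by
    rw [hCIdef]
    have h1 := hgb 0 le_rfl (by linarith [htT])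
    rw [gronwallBound_x0] at h1
    nlinarith [hKc0, hMρ0]
  -- bound on the integrability interval
  have hintdG : ∀ a b : ℝ, IntervalIntegrable (fun s => (d + G s) * ρc s) volume a b := by
    refine hbint _ ((measurable_const.add hGm).mul hρcc.measurable)
      ((|d| + (GA T + GB T)) * Mρ) (fun s => ?_)
    rw [abs_mul]
    refine mul_le_mul ?_ (hρcb s) (abs_nonneg _) hdG0
    calc |d + G s| ≤ |d| + |G s| := abs_add_le _ _
    _ ≤ |d| + (GA T + GB T) := by linarith [hCG s]
  have claimI : ∀ r'' ∈ Icc t T, IntervalIntegrable (fun s => E s * ρ s) volume t r'' →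
      ∀ y ∈ Icc t r'', |I y| ≤ CI := by
    intro r'' hr'' hri
    have htr'' : t ≤ r'' := hr''.1
    have hIcont : ContinuousOn I (Icc t r'') := by
      have := intervalIntegral.continuousOn_primitive_interval' hri left_mem_uIcc
      rwa [uIcc_of_le htr''] at this
    have hIint : ∀ y ∈ Icc t r'', IntervalIntegrable (fun s => |I s|) volume t y := by
      intro y hy
      apply ContinuousOn.intervalIntegrable
      rw [uIcc_of_le hy.1]
      exact (hIcont.mono (Icc_subset_Icc le_rfl hy.2)).abs
    set u : ℝ → ℝ := fun y => ∫ s in t..y, |I s| with hudef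
    have hucont : ContinuousOn u (Icc t r'') := by
      have := intervalIntegral.continuousOn_primitive_interval'
        (hIint r'' ⟨htr'', le_rfl⟩) left_mem_uIcc
      rwa [uIcc_of_le htr''] at this
    have hu0 : ∀ y ∈ Icc t r'', 0 ≤ u y :=
      fun y hy => intervalIntegral.integral_nonneg hy.1 fun s _ => abs_nonneg _
    have hud : ∀ y ∈ Ico t r'', HasDerivWithinAt u (|I y|) (Ici y) y := by
      intro y hy
      have hmem : Icc t r'' ∈ 𝓝[Ioi y] y := by
        refine mem_nhdsWithin.mpr ⟨Iio r'', isOpen_Iio, hy.2, ?_⟩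
        rintro z ⟨hz1, hz2⟩
        exact ⟨hy.1.trans (le_of_lt hz2), le_of_lt hz1⟩
      refine intervalIntegral.integral_hasDerivWithinAt_right
        (hIint y ⟨hy.1, hy.2.le⟩)
        ⟨Icc t r'', hmem, (hIcont.abs.aestronglyMeasurable measurableSet_Icc)⟩ ?_
      exact ((hIcont.abs) y ⟨hy.1, hy.2.le⟩).mono_of_mem_nhdsWithin hmem
    have hIb : ∀ y ∈ Icc t r'', |I y| ≤ Kc + Mρ * u y := by
      intro y hy
      have hyT : y ∈ Icc t T := ⟨hy.1, hy.2.trans hr''.2⟩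
      have hint2' : IntervalIntegrable (fun s => I s * ρc s) volume t y := by
        apply ContinuousOn.intervalIntegrable
        rw [uIcc_of_le hy.1]
        exact (hIcont.mono (Icc_subset_Icc le_rfl hy.2)).mul hρcc.continuousOn
      have hsplit : I y = (∫ s in t..y, (d + G s) * ρc s) - ∫ s in t..y, I s * ρc s := by
        have hcongr : I y = ∫ s in t..y, ((d + G s) * ρc s - I s * ρc s) := by
          refine intervalIntegral.integral_congr ?_
          intro s hs
          rw [uIcc_of_le hy.1] at hs
          have hsI : s ∈ Icc t T := ⟨hs.1, hs.2.trans (hy.2.trans hr''.2)⟩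
          dsimp only
          rw [hE' s hsI, ← hρceq s hsI]
          ring
        rw [hcongr, intervalIntegral.integral_sub (hintdG t y) hint2']
      have hb1 : |∫ s in t..y, (d + G s) * ρc s| ≤ Kc := by
        have := intervalIntegral.norm_integral_le_of_norm_le_const
          (a := t) (b := y) (C := (|d| + (GA T + GB T)) * Mρ)
          (f := fun s => (d + G s) * ρc s) ?_
        · rw [Real.norm_eq_abs] at this
          refine this.trans ?_
          rw [hKcdef]
          have h2 : |y - t| ≤ T - t := by
            rw [abs_of_nonneg (by linarith [hy.1])]
            linarith [hy.2.trans hr''.2]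
          nlinarith [mul_nonneg hdG0 hMρ0]
        · intro s _
          rw [Real.norm_eq_abs, abs_mul]
          refine mul_le_mul ?_ (hρcb s) (abs_nonneg _) hdG0
          calc |d + G s| ≤ |d| + |G s| := abs_add_le _ _
          _ ≤ |d| + (GA T + GB T) := by linarith [hCG s]
      have hb2 : |∫ s in t..y, I s * ρc s| ≤ Mρ * u y := by
        have h3 : |∫ s in t..y, I s * ρc s| ≤ ∫ s in t..y, |I s * ρc s| :=
          intervalIntegral.abs_integral_le_integral_abs hy.1
        have h4 : (∫ s in t..y, |I s * ρc s|) ≤ ∫ s in t..y, Mρ * |I s| := by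
          refine intervalIntegral.integral_mono_on hy.1 hint2'.abs
            ((hIint y hy).const_mul Mρ) ?_
          intro s _
          rw [abs_mul]
          calc |I s| * |ρc s| ≤ |I s| * Mρ :=
            mul_le_mul_of_nonneg_left (hρcb s) (abs_nonneg _)
          _ = Mρ * |I s| := mul_comm _ _
        have h5 : (∫ s in t..y, Mρ * |I s|) = Mρ * u y := by
          rw [hudef]
          exact intervalIntegral.integral_const_mul _ _
        linarith
      calc |I y| ≤ |∫ s in t..y, (d + G s) * ρc s| + |∫ s in t..y, I s * ρc s| := by
            rw [hsplit]; exact abs_sub _ _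
      _ ≤ Kc + Mρ * u y := add_le_add hb1 hb2
    have hgr := norm_le_gronwallBound_of_norm_deriv_right_le (f := u)
      (f' := fun y => |I y|) (δ := 0) (K := Mρ) (ε := Kc) hucont hud
      (by rw [hudef]; simp) ?_
    · intro y hy
      have h7 := hgr y hy
      rw [Real.norm_eq_abs, abs_of_nonneg (hu0 y hy)] at h7
      have h8 := hgb (y - t) (by linarith [hy.1]) (by linarith [hy.2.trans hr''.2])
      have h9 := hIb y hy
      rw [hCIdef]
      nlinarith [hMρ0]
    · intro y hy
      rw [Real.norm_eq_abs, Real.norm_eq_abs, abs_abs,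
        abs_of_nonneg (hu0 y ⟨hy.1, hy.2.le⟩)]
      linarith [hIb y ⟨hy.1, hy.2.le⟩]
  -- integrability of E ρ on all of [t, T]
  have hEρint : IntervalIntegrable (fun s => E s * ρ s) volume t T := by
    by_contra hnot
    set Sc : Set ℝ :=
      {r | r ∈ Icc t T ∧ ¬ IntervalIntegrable (fun s => E s * ρ s) volume t r} with hScdef
    have hne : Sc.Nonempty := ⟨T, ⟨right_mem_Icc.mpr htT', hnot⟩⟩
    have hbdd : BddBelow Sc := ⟨t, fun r hr => hr.1.1⟩
    set r₀ : ℝ := sInf Sc with hr₀def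
    have hr₀1 : t ≤ r₀ := le_csInf hne fun r hr => hr.1.1
    have hr₀2 : r₀ ≤ T := csInf_le hbdd ⟨right_mem_Icc.mpr htT', hnot⟩
    have hbelow : ∀ y, t ≤ y → y < r₀ →
        IntervalIntegrable (fun s => E s * ρ s) volume t y := by
      intro y hty hyr
      by_contra hy
      exact absurd (csInf_le hbdd ⟨⟨hty, hyr.le.trans hr₀2⟩, hy⟩) (not_le.mpr hyr)
    have habove : ∀ y, r₀ < y → ¬ IntervalIntegrable (fun s => E s * ρ s) volume t y := by
      intro y hry hyint
      obtain ⟨z, hz, hzy⟩ := exists_lt_of_csInf_lt hne hry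
      refine hz.2 (hyint.mono_set ?_)
      rw [uIcc_of_le hz.1.1, uIcc_of_le (hz.1.1.trans hzy.le)]
      exact Icc_subset_Icc le_rfl hzy.le
    have hhigh : IntegrableOn (fun s => E s * ρ s) (Ioc r₀ T) volume := by
      have hnice : IntegrableOn (fun s => (d + G s) * ρc s) (Ioc r₀ T) volume :=
        (intervalIntegrable_iff_integrableOn_Ioc_of_le hr₀2).mp (hintdG r₀ T)
      refine hnice.congr_fun ?_ measurableSet_Ioc
      intro s hs
      have hsI : s ∈ Icc t T := ⟨hr₀1.trans hs.1.le, hs.2⟩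
      have hI0 : I s = 0 := intervalIntegral.integral_undef (habove s hs.1)
      dsimp only
      rw [hE' s hsI, hI0, ← hρceq s hsI]
      ring
    have hlowOo : IntegrableOn (fun s => E s * ρ s) (Ioo t r₀) volume := by
      have hIco : ContinuousOn I (Ioo t r₀) := by
        intro y hy
        set r'' : ℝ := (y + r₀) / 2 with hr''def
        have h1 : y < r'' := by rw [hr''def]; linarith [hy.2]
        have h2 : r'' < r₀ := by rw [hr''def]; linarith [hy.2]
        have h3 : t ≤ r'' := hy.1.le.trans h1.le
        have hcont'' : ContinuousOn I (Icc t r'') := by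
          have := intervalIntegral.continuousOn_primitive_interval'
            (hbelow r'' h3 h2) left_mem_uIcc
          rwa [uIcc_of_le h3] at this
        have hmem : Icc t r'' ∈ 𝓝[Ioo t r₀] y := by
          refine mem_nhdsWithin.mpr ⟨Iio r'', isOpen_Iio, h1, ?_⟩
          rintro z ⟨hz1, hz2⟩
          exact ⟨hz2.1.le, hz1.le⟩
        exact (hcont'' y ⟨hy.1.le, h1.le⟩).mono_of_mem_nhdsWithin hmem
      have haesm : AEStronglyMeasurable (fun s => E s * ρ s)
          (volume.restrict (Ioo t r₀)) := by
        have h1 : AEStronglyMeasurable (fun s => (d - I s + G s) * ρc s)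
            (volume.restrict (Ioo t r₀)) :=
          ((aestronglyMeasurable_const.sub
            (hIco.aestronglyMeasurable measurableSet_Ioo)).add
            hGm.aestronglyMeasurable.restrict).mul hρcc.measurable.aestronglyMeasurable.restrict
        refine h1.congr ?_
        filter_upwards [ae_restrict_mem measurableSet_Ioo] with s hs
        have hsI : s ∈ Icc t T := ⟨hs.1.le, hs.2.le.trans hr₀2⟩
        rw [hE' s hsI, hρceq s hsI]
      refine ⟨haesm, ?_⟩
      refine HasFiniteIntegral.restrict_of_bounded
        (C := (|d| + CI + (GA T + GB T)) * Mρ) measure_Ioo_lt_top ?_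
      filter_upwards [ae_restrict_mem measurableSet_Ioo] with s hs
      have hsI : s ∈ Icc t T := ⟨hs.1.le, hs.2.le.trans hr₀2⟩
      have hIbd : |I s| ≤ CI := by
        set r'' : ℝ := (s + r₀) / 2 with hr''def
        have h1 : s < r'' := by rw [hr''def]; linarith [hs.2]
        have h2 : r'' < r₀ := by rw [hr''def]; linarith [hs.2]
        have h3 : t ≤ r'' := hs.1.le.trans h1.le
        exact claimI r'' ⟨h3, h2.le.trans hr₀2⟩ (hbelow r'' h3 h2) s ⟨hs.1.le, h1.le⟩
      rw [Real.norm_eq_abs, hE' s hsI, abs_mul]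
      refine mul_le_mul ?_ (hρb s hsI) (abs_nonneg _)
        (add_nonneg (add_nonneg (abs_nonneg d) hCI0) (add_nonneg (hGA0 T) (hGB0 T)))
      calc |d - I s + G s| ≤ |d - I s| + |G s| := abs_add_le _ _
      _ ≤ (|d| + |I s|) + |G s| := by linarith [abs_sub d (I s)]
      _ ≤ |d| + CI + (GA T + GB T) := by linarith [hCG s]
    have hsing : IntegrableOn (fun s => E s * ρ s) {r₀} volume := by
      have h1 : volume.restrict ({r₀} : Set ℝ) = 0 := by
        rw [Measure.restrict_eq_zero]
        exact Real.volume_singleton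
      rw [IntegrableOn, h1]
      exact integrable_zero_measure
    have hlow : IntegrableOn (fun s => E s * ρ s) (Ioc t r₀) volume := by
      refine (hlowOo.union hsing).mono_set ?_
      intro z hz
      rcases eq_or_lt_of_le hz.2 with h | h
      · exact Or.inr (by rw [h]; rfl)
      · exact Or.inl ⟨hz.1, h⟩
    have hall : IntegrableOn (fun s => E s * ρ s) (Ioc t T) volume := by
      rw [← Ioc_union_Ioc_eq_Ioc hr₀1 hr₀2]
      exact hlow.union hhigh
    exact hnot ((intervalIntegrable_iff_integrableOn_Ioc_of_le htT').mpr hall)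
  -- integrability of D ρ
  have hDρint : IntervalIntegrable (fun s => D s * ρ s) volume t T := by
    rw [intervalIntegrable_iff_integrableOn_Ioc_of_le htT']
    set MX : ℝ := |A t| + |A T| + (|B t| + |B T|) with hMXdef
    have hXb : ∀ s ∈ Icc t T, |X s| ≤ MX := by
      intro s hs
      rw [hX s, hMXdef]
      have hA1 := A.mono hs.1
      have hA2 := A.mono hs.2
      have hB1 := B.mono hs.1
      have hB2 := B.mono hs.2
      have h1 : |A s| ≤ |A t| + |A T| := by
        rw [abs_le]
        constructor
        · linarith [neg_abs_le (A t), abs_nonneg (A T)]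
        · linarith [le_abs_self (A T), abs_nonneg (A t)]
      have h2 : |B s| ≤ |B t| + |B T| := by
        rw [abs_le]
        constructor
        · linarith [neg_abs_le (B t), abs_nonneg (B T)]
        · linarith [le_abs_self (B T), abs_nonneg (B t)]
      calc |A s - B s| ≤ |A s| + |B s| := abs_sub _ _
      _ ≤ _ := add_le_add h1 h2
    obtain ⟨M1, hM1⟩ := isCompact_Icc.exists_bound_of_continuousOn hγcont
    have hM10 : 0 ≤ M1 := le_trans (norm_nonneg _) (hM1 t ⟨le_rfl, htT'⟩)
    obtain ⟨M2, hM2⟩ := isCompact_Icc.exists_bound_of_continuousOn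
      ((hνic.mul (continuous_const.sub hJc)).continuousOn
        (s := Icc t T))
    have hM20 : 0 ≤ M2 := le_trans (norm_nonneg _) (hM2 t ⟨le_rfl, htT'⟩)
    have hMX0 : 0 ≤ MX := le_trans (abs_nonneg _) (hXb t ⟨le_rfl, htT'⟩)
    have haesm : AEStronglyMeasurable (fun s => D s * ρ s)
        (volume.restrict (Ioc t T)) := by
      have h1 : AEStronglyMeasurable
          (fun s => (γc s * X s + νi s * (d - γ t * x - J s)) * ρc s)
          (volume.restrict (Ioc t T)) :=
        (((hγcc.measurable.mul hXm).add (hνic.measurable.mul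
          (measurable_const.sub hJc.measurable))).mul
          hρcc.measurable).aestronglyMeasurable.restrict
      refine h1.congr ?_
      filter_upwards [ae_restrict_mem measurableSet_Ioc] with s hs
      have hsI : s ∈ Icc t T := ⟨hs.1.le, hs.2⟩
      rw [hDs s hsI, hγceq s hsI, hρceq s hsI]
    refine ⟨haesm, ?_⟩
    refine HasFiniteIntegral.restrict_of_bounded
      (C := (M1 * MX + M2) * Mρ) measure_Ioc_lt_top ?_
    filter_upwards [ae_restrict_mem measurableSet_Ioc] with s hs
    have hsI : s ∈ Icc t T := ⟨hs.1.le, hs.2⟩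
    rw [Real.norm_eq_abs, hDs s hsI, abs_mul]
    refine mul_le_mul ?_ (hρb s hsI) (abs_nonneg _)
      (add_nonneg (mul_nonneg hM10 hMX0) hM20)
    calc |γ s * X s + νi s * (d - γ t * x - J s)|
        ≤ |γ s * X s| + |νi s * (d - γ t * x - J s)| := abs_add_le _ _
    _ ≤ M1 * MX + M2 := by
        refine add_le_add ?_ ?_
        · rw [abs_mul]
          refine mul_le_mul ?_ (hXb s hsI) (abs_nonneg _) hM10
          have := hM1 s hsI
          rwa [Real.norm_eq_abs] at this
        · have := hM2 s hsI
          rwa [Real.norm_eq_abs] at this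
  -- subtraction
  have hsubint : ∀ r ∈ Icc t T, IntervalIntegrable (fun s => E s * ρ s) volume t r ∧
      IntervalIntegrable (fun s => D s * ρ s) volume t r := by
    intro r hr
    have hss : uIcc t r ⊆ uIcc t T := by
      rw [uIcc_of_le hr.1, uIcc_of_le htT']
      exact Icc_subset_Icc le_rfl hr.2
    exact ⟨hEρint.mono_set hss, hDρint.mono_set hss⟩
  have hfρint : IntervalIntegrable (fun s => (E s - D s) * ρ s) volume t T := by
    have h2 : (fun s => (E s - D s) * ρ s)
        = (fun s => E s * ρ s) - fun s => D s * ρ s := by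
      funext s
      simp only [Pi.sub_apply]
      ring
    rw [h2]
    exact hEρint.sub hDρint
  set F : ℝ → ℝ := fun r => ∫ s in t..r, (E s - D s) * ρ s with hFdef
  have hsub2 : ∀ r ∈ Icc t T, F r = I r - ∫ s in t..r, D s * ρ s := by
    intro r hr
    have h1 : F r = ∫ s in t..r, (E s * ρ s - D s * ρ s) := by
      rw [hFdef]
      refine intervalIntegral.integral_congr ?_
      intro s _
      dsimp only
      ring
    rw [h1, intervalIntegral.integral_sub (hsubint r hr).1 (hsubint r hr).2]
  have hFcont : ContinuousOn F (Icc t T) := by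
    have := intervalIntegral.continuousOn_primitive_interval' hfρint left_mem_uIcc
    rwa [uIcc_of_le htT'] at this
  have hED : ∀ r ∈ Icc t T, E r - D r = -(F r) := by
    intro r hr
    have h1 := hE' r hr
    have h2 : D r = d - (∫ s in t..r, D s * ρ s) + G r := by
      rw [hpart1 r hr, hGeq r hr]
    have h3 := hsub2 r hr
    have h4 : I r = ∫ s in t..r, E s * ρ s := rfl
    linarith [h1, h2, h3]
  have hFd : ∀ y ∈ Ico t T, HasDerivWithinAt F ((E y - D y) * ρ y) (Ici y) y := by
    intro y hy
    have hIccmem : Icc t T ∈ 𝓝[Ioi y] y := by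
      refine mem_nhdsWithin.mpr ⟨Iio T, isOpen_Iio, hy.2, ?_⟩
      rintro z ⟨hz1, hz2⟩
      exact ⟨hy.1.trans (le_of_lt hz2), hz1.le⟩
    have haesm : AEStronglyMeasurable (fun s => (E s - D s) * ρ s)
        (volume.restrict (Icc t T)) :=
      ((integrableOn_Icc_iff_integrableOn_Ioc (f := fun s => (E s - D s) * ρ s) (a := t) (b := T) (μ := volume)).mpr
        ((intervalIntegrable_iff_integrableOn_Ioc_of_le htT').mp hfρint)).aestronglyMeasurable
    have hrc : ContinuousWithinAt (fun s => (E s - D s) * ρ s) (Ioi y) y := by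
      have hEc : ContinuousWithinAt E (Ioi y) y := hErc y hy
      have hDc : ContinuousWithinAt D (Ioi y) y := by
        have hnice : ContinuousWithinAt
            (fun s => γc s * X s + νi s * (d - γ t * x - J s)) (Ioi y) y :=
          ((hγcc.continuousAt.continuousWithinAt.mul (hXrc y)).add
            (hνic.continuousAt.continuousWithinAt.mul
              ((continuous_const.sub hJc).continuousAt.continuousWithinAt)))
        have h5 : ContinuousWithinAt D (Ioi y ∩ Icc t T) y := by
          refine ((hnice.mono inter_subset_left).congr ?_ ?_)
          · intro z hz
            rw [hDs z hz.2, hγceq z hz.2]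
          · rw [hDs y ⟨hy.1, hy.2.le⟩, hγceq y ⟨hy.1, hy.2.le⟩]
        refine h5.mono_of_mem_nhdsWithin ?_
        refine mem_nhdsWithin.mpr ⟨Iio T, isOpen_Iio, hy.2, ?_⟩
        rintro z ⟨hz1, hz2⟩
        exact ⟨hz2, ⟨hy.1.trans (le_of_lt hz2), hz1.le⟩⟩
      have hρrc : ContinuousWithinAt ρ (Ioi y) y :=
        (hρ y ⟨hy.1, hy.2.le⟩).mono_of_mem_nhdsWithin hIccmem
      exact (hEc.sub hDc).mul hρrc
    refine intervalIntegral.integral_hasDerivWithinAt_right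
      (hfρint.mono_set ?_) ⟨Icc t T, hIccmem, haesm⟩ hrc
    rw [uIcc_of_le hy.1, uIcc_of_le htT']
    exact Icc_subset_Icc le_rfl hy.2.le
  have hF0 : ∀ y ∈ Icc t T, ‖F y‖ ≤ gronwallBound 0 Mρ 0 (y - t) := by
    refine norm_le_gronwallBound_of_norm_deriv_right_le hFcont hFd ?_ ?_
    · have h1 : F t = 0 := by rw [hFdef]; simp
      rw [h1]
      simp
    · intro y hy
      have h6 := hED y ⟨hy.1, hy.2.le⟩
      rw [Real.norm_eq_abs, Real.norm_eq_abs, abs_mul, h6, abs_neg, add_zero]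
      calc |F y| * |ρ y| ≤ |F y| * Mρ :=
        mul_le_mul_of_nonneg_left (hρb y ⟨hy.1, hy.2.le⟩) (abs_nonneg _)
      _ = Mρ * |F y| := mul_comm _ _
  intro r hr
  have h7 := hF0 r hr
  rw [gronwallBound_ε0_δ0] at h7
  have h8 : F r = 0 := norm_le_zero_iff.mp h7
  have h9 := hED r hr
  linarith
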